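/- Let H be a finite group whose abelianization is cyclic of order 3, and suppose H has a disjoint pair of spherical systems of generators (T₁, T₂), where Tᵢ = (h_{i1}, h_{i2}, h_{i3}) with ord(h_{i1}) = 2, ord(h_{i2}) = 3, ord(h_{i3}) = 9 for i = 1, 2. Then: (i) for each i = 1, 2, the three elements h_{i1}, h_{i2}h_{i1}h_{i2}⁻¹, h_{i2}²h_{i1}h_{i2}⁻² each have order 2 and together generate the commutator subgroup H' of H, and the element z_i := h_{i1}·(h_{i2}h_{i1}h_{i2}⁻¹)·(h_{i2}²h_{i1}h_{i2}⁻²) has order 3; (ii) the sets Σ̃₁ and Σ̃₂ are disjoint, where Σ̃ᵢ := ⋃_{h ∈ H'} h·{h_{i1}, z_i, z_i²}·h⁻¹. -/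

import Mathlib

/-- A spherical system of generators of a group `G`: a tuple generating `G`
whose product equals `1`. -/
def SphericalSystem {H : Type*} [Group H] {r : ℕ} (T : Fin r → H) : Prop :=
  Subgroup.closure (Set.range T) = ⊤ ∧ (List.ofFn T).prod = 1

/-- `Σ(T)`: the union of all conjugates of the cyclic subgroups generated
by the entries of `T`. -/
def SigmaSet {H : Type*} [Group H] {r : ℕ} (T : Fin r → H) : Set H :=
  ⋃ (g : H) (i : Fin r) (j : ℕ), {g * T i ^ j * g⁻¹}

/-- The triple `(h₁, h₂h₁h₂⁻¹, h₂²h₁h₂⁻²)` attached to a triple `T = (h₁,h₂,h₃)`. -/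
def conjTriple {H : Type*} [Group H] (T : Fin 3 → H) : Fin 3 → H :=
  ![T 0, T 1 * T 0 * (T 1)⁻¹, (T 1) ^ 2 * T 0 * ((T 1) ^ 2)⁻¹]

/-- The element `z = h₁ · h₂h₁h₂⁻¹ · h₂²h₁h₂⁻²`. -/
def zElt {H : Type*} [Group H] (T : Fin 3 → H) : H :=
  T 0 * (T 1 * T 0 * (T 1)⁻¹) * ((T 1) ^ 2 * T 0 * ((T 1) ^ 2)⁻¹)

/-- `Σ̃` : the union over `h` in the commutator subgroup of the conjugates
`h·{h₁, z, z²}·h⁻¹`. -/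
def tildeSigma {H : Type*} [Group H] (T : Fin 3 → H) : Set H :=
  ⋃ h ∈ (commutator H : Set H),
    {h * T 0 * h⁻¹, h * zElt T * h⁻¹, h * (zElt T) ^ 2 * h⁻¹}

section Aux

variable {H : Type*} [Group H]

omit [Group H] in
lemma aux_nothing : True := trivial

lemma aux_conj_orderOf (b x : H) : orderOf (b * x * b⁻¹) = orderOf x :=
  (SemiconjBy.orderOf_eq b (show b * x = (b * x * b⁻¹) * b by group)).symm

lemma aux_key [Finite H]
    (habo : Nat.card (Abelianization H) = 3)
    (T : Fin 3 → H) (hs : SphericalSystem T)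
    (ho : orderOf (T 0) = 2 ∧ orderOf (T 1) = 3 ∧ orderOf (T 2) = 9) :
    (∀ i, orderOf (conjTriple T i) = 2) ∧
      Subgroup.closure (Set.range (conjTriple T)) = commutator H ∧
      orderOf (zElt T) = 3 ∧ zElt T = (T 2) ^ 6 := by
  obtain ⟨h0, h1, h2⟩ := ho
  have hP : T 0 * T 1 * T 2 = 1 := by
    have := hs.2
    simpa [List.ofFn_succ, mul_assoc] using this
  have hc : (T 1) ^ 3 = 1 := by
    have := pow_orderOf_eq_one (T 1); rwa [h1] at this
  have h9 : (T 2) ^ 9 = 1 := by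
    have := pow_orderOf_eq_one (T 2); rwa [h2] at this
  have h01 : T 0 * T 1 = (T 2)⁻¹ := eq_inv_of_mul_eq_one_left hP
  have ht2 : T 2 = (T 1)⁻¹ * (T 0)⁻¹ := by
    rw [eq_comm, ← mul_inv_rev, inv_eq_iff_eq_inv, ← h01]
  -- z = (T 2) ^ 6
  have e3 : ∀ x : H, x ^ 3 = x * x * x := fun x => by
    rw [pow_succ, pow_succ, pow_one]
  have hze : zElt T = (T 2) ^ 6 := by
    have hz : zElt T * (T 1) ^ 3 = (T 0 * T 1) ^ 3 := by
      rw [e3, e3]; unfold zElt; group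
    rw [hc, mul_one, h01] at hz
    rw [hz, inv_pow, inv_eq_iff_mul_eq_one, ← pow_add]
    norm_num [h9]
  -- orderOf z = 3
  have hzo : orderOf (zElt T) = 3 := by
    rw [hze, orderOf_pow, h2]; decide
  -- orders of conjTriple
  have hord : ∀ i, orderOf (conjTriple T i) = 2 := by
    intro i
    fin_cases i <;> simp [conjTriple, aux_conj_orderOf, h0]
  refine ⟨hord, ?_, hzo, hze⟩
  -- T 0 lies in the commutator subgroup
  have hT0 : T 0 ∈ commutator H := by
    have hd1 : orderOf (Abelianization.of (T 0)) ∣ 2 := by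
      have := orderOf_map_dvd (Abelianization.of) (T 0); rwa [h0] at this
    have hd2 : orderOf (Abelianization.of (T 0)) ∣ 3 := by
      have := orderOf_dvd_natCard (Abelianization.of (T 0)); rwa [habo] at this
    have h1' : Abelianization.of (T 0) = 1 := by
      have := Nat.dvd_gcd hd1 hd2; norm_num at this; exact this
    exact (QuotientGroup.eq_one_iff (T 0)).mp h1'
  set K := Subgroup.closure (Set.range (conjTriple T)) with hK
  -- K ≤ commutator H
  have hKle : K ≤ commutator H := by
    rw [hK, Subgroup.closure_le]
    rintro x ⟨i, rfl⟩
    have hN : (commutator H).Normal := inferInstance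
    fin_cases i <;> simp only [conjTriple, Matrix.cons_val_zero, Matrix.cons_val_one,
      Matrix.head_cons, Matrix.cons_val_two, Matrix.tail_cons, SetLike.mem_coe]
    · exact hT0
    · exact hN.conj_mem _ hT0 (T 1)
    · exact hN.conj_mem _ hT0 ((T 1) ^ 2)
  -- generators of K
  have g0 : T 0 ∈ K := Subgroup.subset_closure ⟨0, rfl⟩
  have g1 : T 1 * T 0 * (T 1)⁻¹ ∈ K := Subgroup.subset_closure ⟨1, rfl⟩
  have g2 : (T 1) ^ 2 * T 0 * ((T 1) ^ 2)⁻¹ ∈ K := Subgroup.subset_closure ⟨2, rfl⟩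
  -- conjugation stability
  have conj_mem : ∀ g : H, (∀ i, g * conjTriple T i * g⁻¹ ∈ K) →
      ∀ x ∈ K, g * x * g⁻¹ ∈ K := by
    intro g hg x hx
    have hle : K ≤ K.comap (MulAut.conj g).toMonoidHom := by
      rw [hK, Subgroup.closure_le]
      rintro y ⟨i, rfl⟩
      simpa [Subgroup.mem_comap, MulAut.conj_apply, mul_assoc] using hg i
    have := hle hx
    simpa [Subgroup.mem_comap, MulAut.conj_apply, mul_assoc] using this
  have norm_of : ∀ g : H, (∀ i, g * conjTriple T i * g⁻¹ ∈ K) →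
      (∀ i, g⁻¹ * conjTriple T i * g⁻¹⁻¹ ∈ K) → g ∈ Subgroup.normalizer (K : Set H) := by
    intro g hg hg'
    rw [Subgroup.mem_normalizer_iff]
    intro x
    constructor
    · exact fun hx => conj_mem g hg x hx
    · intro hx
      have h' := conj_mem g⁻¹ hg' _ hx
      have e : g⁻¹ * (g * x * g⁻¹) * g⁻¹⁻¹ = x := by group
      rwa [e] at h'
  -- T 1 is in the normalizer of K
  have hb1 : ∀ i, T 1 * conjTriple T i * (T 1)⁻¹ ∈ K := by
    intro i
    fin_cases i
    · exact g1
    · show T 1 * (T 1 * T 0 * (T 1)⁻¹) * (T 1)⁻¹ ∈ K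
      have e : T 1 * (T 1 * T 0 * (T 1)⁻¹) * (T 1)⁻¹
          = (T 1) ^ 2 * T 0 * ((T 1) ^ 2)⁻¹ := by rw [pow_two]; group
      rw [e]; exact g2
    · show T 1 * ((T 1) ^ 2 * T 0 * ((T 1) ^ 2)⁻¹) * (T 1)⁻¹ ∈ K
      have e : T 1 * ((T 1) ^ 2 * T 0 * ((T 1) ^ 2)⁻¹) * (T 1)⁻¹
          = (T 1) ^ 3 * T 0 * ((T 1) ^ 3)⁻¹ := by group
      rw [e, hc]
      simpa using g0
  have hb1' : ∀ i, (T 1)⁻¹ * conjTriple T i * (T 1)⁻¹⁻¹ ∈ K := by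
    intro i
    fin_cases i
    · show (T 1)⁻¹ * T 0 * (T 1)⁻¹⁻¹ ∈ K
      rw [inv_inv]
      have e : (T 1)⁻¹ * T 0 * T 1
          = ((T 1) ^ 3)⁻¹ * ((T 1) ^ 2 * T 0 * ((T 1) ^ 2)⁻¹) * (T 1) ^ 3 := by group
      rw [e, hc]
      simpa using g2
    · show (T 1)⁻¹ * (T 1 * T 0 * (T 1)⁻¹) * (T 1)⁻¹⁻¹ ∈ K
      rw [inv_inv]
      have e : (T 1)⁻¹ * (T 1 * T 0 * (T 1)⁻¹) * T 1 = T 0 := by group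
      rw [e]; exact g0
    · show (T 1)⁻¹ * ((T 1) ^ 2 * T 0 * ((T 1) ^ 2)⁻¹) * (T 1)⁻¹⁻¹ ∈ K
      rw [inv_inv]
      have e : (T 1)⁻¹ * ((T 1) ^ 2 * T 0 * ((T 1) ^ 2)⁻¹) * T 1
          = T 1 * T 0 * (T 1)⁻¹ := by group
      rw [e]; exact g1
  have hn0 : T 0 ∈ Subgroup.normalizer (K : Set H) := Subgroup.le_normalizer g0
  have hn1 : T 1 ∈ Subgroup.normalizer (K : Set H) := norm_of _ hb1 hb1'
  have hn2 : T 2 ∈ Subgroup.normalizer (K : Set H) := by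
    rw [ht2]
    exact Subgroup.mul_mem _ (Subgroup.inv_mem _ hn1) (Subgroup.inv_mem _ hn0)
  have hNorm : K.Normal := by
    have hle : Subgroup.closure (Set.range T) ≤ Subgroup.normalizer (K : Set H) := by
      rw [Subgroup.closure_le]
      rintro x ⟨i, rfl⟩
      fin_cases i
      · exact hn0
      · exact hn1
      · exact hn2
    rw [hs.1] at hle
    exact Subgroup.normalizer_eq_top_iff.mp (top_le_iff.mp hle)
  haveI := hNorm
  -- the quotient H/K is generated by the image of T 1
  set π := QuotientGroup.mk' K with hπ
  have hgen : ∀ g : H, π g ∈ Subgroup.zpowers (π (T 1)) := by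
    intro g
    have hg : g ∈ Subgroup.closure (Set.range T) := by
      rw [hs.1]; exact Subgroup.mem_top g
    refine Subgroup.closure_induction ?_ ?_ ?_ ?_ hg
    · rintro x ⟨i, rfl⟩
      fin_cases i
      · show π (T 0) ∈ Subgroup.zpowers (π (T 1))
        have h' : π (T 0) = 1 := (QuotientGroup.eq_one_iff (T 0)).mpr g0
        rw [h']; exact one_mem _
      · exact Subgroup.mem_zpowers _
      · show π (T 2) ∈ Subgroup.zpowers (π (T 1))
        have h' : π (T 2) = (π (T 1))⁻¹ * (π (T 0))⁻¹ := by
          rw [ht2, map_mul, map_inv, map_inv]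
        have h0' : π (T 0) = 1 := (QuotientGroup.eq_one_iff (T 0)).mpr g0
        rw [h', h0', inv_one, mul_one]
        exact Subgroup.inv_mem _ (Subgroup.mem_zpowers _)
    · simp only [map_one]; exact one_mem _
    · intro x y _ _ hx hy
      rw [map_mul]; exact Subgroup.mul_mem _ hx hy
    · intro x _ hx
      rw [map_inv]; exact Subgroup.inv_mem _ hx
  have hcom : commutator H ≤ K := by
    rw [commutator_def, Subgroup.commutator_le]
    intro g₁ _ g₂ _
    obtain ⟨m, hm⟩ := Subgroup.mem_zpowers_iff.mp (hgen g₁)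
    obtain ⟨n, hn⟩ := Subgroup.mem_zpowers_iff.mp (hgen g₂)
    have hcomm : π g₁ * π g₂ = π g₂ * π g₁ := by
      rw [← hm, ← hn, ← zpow_add, ← zpow_add, add_comm]
    have hone : π (open scoped commutatorElement in ⁅g₁, g₂⁆) = 1 := by
      rw [map_commutatorElement]
      exact commutatorElement_eq_one_iff_mul_comm.mpr hcomm
    exact (QuotientGroup.eq_one_iff _).mp hone
  exact le_antisymm hKle hcom

lemma aux_tilde_sub (T : Fin 3 → H) (hz : zElt T = (T 2) ^ 6) :
    tildeSigma T ⊆ SigmaSet T := by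
  intro x hx
  simp only [tildeSigma, Set.mem_iUnion, Set.mem_insert_iff, Set.mem_singleton_iff,
    exists_prop] at hx
  obtain ⟨h, _, hc⟩ := hx
  simp only [SigmaSet, Set.mem_iUnion, Set.mem_singleton_iff]
  rcases hc with rfl | rfl | rfl
  · exact ⟨h, 0, 1, by rw [pow_one]⟩
  · exact ⟨h, 2, 6, by rw [hz]⟩
  · exact ⟨h, 2, 12, by rw [hz, ← pow_mul]⟩

lemma aux_one_not_mem [Finite H] (T : Fin 3 → H) (h0 : orderOf (T 0) = 2)
    (hz : orderOf (zElt T) = 3) : (1 : H) ∉ tildeSigma T := by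
  intro hx
  simp only [tildeSigma, Set.mem_iUnion, Set.mem_insert_iff, Set.mem_singleton_iff,
    exists_prop] at hx
  obtain ⟨h, _, hc⟩ := hx
  have hz2 : orderOf ((zElt T) ^ 2) = 3 := by
    rw [orderOf_pow, hz]; decide
  rcases hc with hc | hc | hc
  · have : orderOf (T 0) = 1 := by
      rw [← aux_conj_orderOf h (T 0), ← hc]; exact orderOf_one
    omega
  · have : orderOf (zElt T) = 1 := by
      rw [← aux_conj_orderOf h (zElt T), ← hc]; exact orderOf_one
    omega
  · have : orderOf ((zElt T) ^ 2) = 1 := by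
      rw [← aux_conj_orderOf h ((zElt T) ^ 2), ← hc]; exact orderOf_one
    omega

end Aux

theorem stmt_18 (H : Type*) [Group H] [Finite H]
    (habc : IsCyclic (Abelianization H)) (habo : Nat.card (Abelianization H) = 3)
    (T₁ T₂ : Fin 3 → H)
    (hs₁ : SphericalSystem T₁) (hs₂ : SphericalSystem T₂)
    (ho₁ : orderOf (T₁ 0) = 2 ∧ orderOf (T₁ 1) = 3 ∧ orderOf (T₁ 2) = 9)
    (ho₂ : orderOf (T₂ 0) = 2 ∧ orderOf (T₂ 1) = 3 ∧ orderOf (T₂ 2) = 9)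
    (hdisj : SigmaSet T₁ ∩ SigmaSet T₂ = {1}) :
    (∀ T ∈ ({T₁, T₂} : Set (Fin 3 → H)),
      (∀ i, orderOf (conjTriple T i) = 2) ∧
      Subgroup.closure (Set.range (conjTriple T)) = commutator H ∧
      orderOf (zElt T) = 3) ∧
    tildeSigma T₁ ∩ tildeSigma T₂ = ∅ := by
  obtain ⟨k₁o, k₁c, k₁z, k₁e⟩ := aux_key habo T₁ hs₁ ho₁
  obtain ⟨k₂o, k₂c, k₂z, k₂e⟩ := aux_key habo T₂ hs₂ ho₂
  constructor
  · rintro T (rfl | rfl)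
    · exact ⟨k₁o, k₁c, k₁z⟩
    · exact ⟨k₂o, k₂c, k₂z⟩
  · ext x
    simp only [Set.mem_inter_iff, Set.mem_empty_iff_false, iff_false, not_and]
    intro hx1 hx2
    have hx : x ∈ SigmaSet T₁ ∩ SigmaSet T₂ :=
      ⟨aux_tilde_sub T₁ k₁e hx1, aux_tilde_sub T₂ k₂e hx2⟩
    rw [hdisj] at hx
    rw [Set.mem_singleton_iff] at hx
    subst hx
    exact aux_one_not_mem T₁ ho₁.1 k₁z hx1
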